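/- arXiv:2111.14222 — 2 statements merged into one kernel-verified Lean document; each statement's English description precedes it below -/
import Mathlib

section
/- Let H be a complex Hilbert space, let A be a Hilbert–Schmidt operator on H, and let 0 < ν < 1. Then w_{(2,ν)}(A) = √(2ν² - 2ν + 1) ‖A‖₂ if and only if tr(A²) = 0. -/
variable {H : Type*} [NormedAddCommGroup H] [InnerProductSpace ℂ H] [CompleteSpace H]

/-- The operator `ν e^{iθ} A + (1-ν) e^{-iθ} A*`. -/
noncomputable def weightedPart {E : Type*} [NormedAddCommGroup E] [InnerProductSpace ℂ E]
    [CompleteSpace E] (ν θ : ℝ) (A : E →L[ℂ] E) : E →L[ℂ] E :=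
  ((ν : ℂ) * Complex.exp (θ * Complex.I)) • A +
    (((1 - ν : ℝ) : ℂ) * Complex.exp (-(θ * Complex.I))) • ContinuousLinearMap.adjoint A

/-- The Hilbert–Schmidt norm `‖A‖₂ = √(∑ᵢ ‖A eᵢ‖²)` computed w.r.t. a Hilbert basis `e`. -/
noncomputable def hsNorm {E : Type*} [NormedAddCommGroup E] [InnerProductSpace ℂ E]
    {ι : Type*} (e : HilbertBasis ι ℂ E) (A : E →L[ℂ] E) : ℝ :=
  Real.sqrt (∑' i, ‖A (e i)‖ ^ 2)

/-- The trace `tr(T) = ∑ᵢ ⟨eᵢ, T eᵢ⟩` computed w.r.t. a Hilbert basis `e`. -/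
noncomputable def trBasis {E : Type*} [NormedAddCommGroup E] [InnerProductSpace ℂ E]
    {ι : Type*} (e : HilbertBasis ι ℂ E) (T : E →L[ℂ] E) : ℂ :=
  ∑' i, (inner ℂ (e i) (T (e i)) : ℂ)

/-- The weighted Hilbert–Schmidt numerical radius
`w_{(2,ν)}(A) = sup_{θ ∈ ℝ} ‖ν e^{iθ} A + (1-ν) e^{-iθ} A*‖₂`. -/
noncomputable def wHS {E : Type*} [NormedAddCommGroup E] [InnerProductSpace ℂ E]
    [CompleteSpace E] {ι : Type*} (e : HilbertBasis ι ℂ E) (ν : ℝ) (A : E →L[ℂ] E) : ℝ :=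
  ⨆ θ : ℝ, hsNorm e (weightedPart ν θ A)

/-- The block operator `[[X, Y],[Z, W]]` on the Hilbert space direct sum `H ⊕₂ H`,
mapping `(x, y)` to `(Xx + Yy, Zx + Wy)`. -/
noncomputable def blockOp (X Y Z W : H →L[ℂ] H) :
    WithLp 2 (H × H) →L[ℂ] WithLp 2 (H × H) :=
  ((WithLp.prodContinuousLinearEquiv 2 ℂ H H).symm.toContinuousLinearMap).comp
    ((((X.comp (ContinuousLinearMap.fst ℂ H H)) + (Y.comp (ContinuousLinearMap.snd ℂ H H))).prod
      ((Z.comp (ContinuousLinearMap.fst ℂ H H)) + (W.comp (ContinuousLinearMap.snd ℂ H H)))).comp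
      (WithLp.prodContinuousLinearEquiv 2 ℂ H H).toContinuousLinearMap)

set_option linter.unusedSectionVars false

private lemma parseval' {ι : Type*} (e : HilbertBasis ι ℂ H) (x : H) :
    HasSum (fun i => ‖(inner ℂ (e i) x : ℂ)‖ ^ 2) (‖x‖ ^ 2) := by
  have h := e.hasSum_inner_mul_inner x x
  rw [inner_self_eq_norm_sq_to_K (𝕜 := ℂ)] at h
  have h2 : ∀ i, (inner ℂ x (e i) : ℂ) * inner ℂ (e i) x
      = ((‖(inner ℂ (e i) x : ℂ)‖ ^ 2 : ℝ) : ℂ) := by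
    intro i
    rw [← inner_conj_symm x (e i), ← Complex.normSq_eq_conj_mul_self,
      Complex.normSq_eq_norm_sq]
  simp only [h2] at h
  apply Complex.hasSum_ofReal.mp
  convert h using 2 <;> norm_cast

private lemma adjoint_hasSum' {ι : Type*} (e : HilbertBasis ι ℂ H) (A : H →L[ℂ] H)
    (hA : Summable fun i => ‖A (e i)‖ ^ 2) :
    HasSum (fun i => ‖(ContinuousLinearMap.adjoint A) (e i)‖ ^ 2)
      (∑' i, ‖A (e i)‖ ^ 2) := by
  set B := ContinuousLinearMap.adjoint A with hBdef
  set F : ι × ι → ℝ := fun p => ‖(inner ℂ (e p.2) (A (e p.1)) : ℂ)‖ ^ 2 with hF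
  have hFnn : 0 ≤ F := fun p => by positivity
  have hrow : ∀ j, HasSum (fun i => F (j, i)) (‖A (e j)‖ ^ 2) := fun j => parseval' e (A (e j))
  have hFsum : Summable F := by
    rw [summable_prod_of_nonneg hFnn]
    refine ⟨fun j => (hrow j).summable, ?_⟩
    have : (fun j => ∑' i, F (j, i)) = fun j => ‖A (e j)‖ ^ 2 :=
      funext fun j => (hrow j).tsum_eq
    rw [this]; exact hA
  have hcol : ∀ i, HasSum (fun j => F (j, i)) (‖B (e i)‖ ^ 2) := by
    intro i
    have h := parseval' e (B (e i))
    have heq : ∀ j, ‖(inner ℂ (e j) (B (e i)) : ℂ)‖ ^ 2 = F (j, i) := by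
      intro j
      have h1 : (inner ℂ (e j) (B (e i)) : ℂ) = inner ℂ (A (e j)) (e i) :=
        ContinuousLinearMap.adjoint_inner_right A (e j) (e i)
      rw [hF]; dsimp only
      rw [h1, ← inner_conj_symm (A (e j)) (e i), RCLike.norm_conj]
    simpa only [heq] using h
  have hs2 : Summable fun i => ‖B (e i)‖ ^ 2 := by
    have h1 : Summable fun i => ∑' j, F (j, i) := (hFsum.prod_symm).prod
    exact h1.congr fun i => (hcol i).tsum_eq
  rw [Summable.hasSum_iff hs2]
  calc ∑' i, ‖B (e i)‖ ^ 2 = ∑' i, ∑' j, F (j, i) :=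
        tsum_congr fun i => (hcol i).tsum_eq.symm
    _ = ∑' j, ∑' i, F (j, i) := Summable.tsum_comm (f := fun j i => F (j, i)) (by exact hFsum)
    _ = ∑' j, ‖A (e j)‖ ^ 2 := tsum_congr fun j => (hrow j).tsum_eq

private lemma wp_norm_sq' (ν θ : ℝ) (hν₀ : 0 ≤ ν) (hν₁ : ν ≤ 1) (A : H →L[ℂ] H) (x : H) :
    ‖weightedPart ν θ A x‖ ^ 2
      = ν ^ 2 * ‖A x‖ ^ 2 + (1 - ν) ^ 2 * ‖(ContinuousLinearMap.adjoint A) x‖ ^ 2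
        + 2 * (ν * (1 - ν)) * (Complex.exp (((-(2 * θ) : ℝ) : ℂ) * Complex.I) *
            inner ℂ (A x) ((ContinuousLinearMap.adjoint A) x)).re := by
  set B := ContinuousLinearMap.adjoint A with hB
  have hx : weightedPart ν θ A x = ((ν : ℂ) * Complex.exp (θ * Complex.I)) • A x +
      (((1 - ν : ℝ) : ℂ) * Complex.exp (-(θ * Complex.I))) • B x := rfl
  rw [hx, norm_add_sq (𝕜 := ℂ), norm_smul, norm_smul, inner_smul_left, inner_smul_right]
  have hc1 : ‖(ν : ℂ) * Complex.exp (θ * Complex.I)‖ = ν := by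
    rw [norm_mul, Complex.norm_exp]
    simp [abs_of_nonneg hν₀]
  have hc2 : ‖((1 - ν : ℝ) : ℂ) * Complex.exp (-(θ * Complex.I))‖ = 1 - ν := by
    rw [norm_mul, Complex.norm_exp, Complex.norm_real]
    simp [abs_of_nonneg (by linarith : (0:ℝ) ≤ 1 - ν)]
  have hc3 : (starRingEnd ℂ) ((ν : ℂ) * Complex.exp (θ * Complex.I)) *
      ((((1 - ν : ℝ) : ℂ) * Complex.exp (-(θ * Complex.I))) * inner ℂ (A x) (B x))
      = ((ν * (1 - ν) : ℝ) : ℂ) * (Complex.exp (((-(2 * θ) : ℝ) : ℂ) * Complex.I) *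
          inner ℂ (A x) (B x)) := by
    rw [map_mul, Complex.conj_ofReal, ← Complex.exp_conj]
    have h4 : (starRingEnd ℂ) ((θ : ℂ) * Complex.I) = -((θ : ℂ) * Complex.I) := by
      simp [Complex.conj_I, mul_comm]
    rw [h4]
    rw [show ((ν:ℂ) * Complex.exp (-(↑θ * Complex.I))) *
        ((((1 - ν : ℝ) : ℂ) * Complex.exp (-(↑θ * Complex.I))) * inner ℂ (A x) (B x))
        = ((ν:ℂ) * ((1 - ν : ℝ) : ℂ)) * ((Complex.exp (-(↑θ * Complex.I)) *
          Complex.exp (-(↑θ * Complex.I))) * inner ℂ (A x) (B x)) by ring]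
    rw [← Complex.exp_add]
    push_cast
    ring_nf
  rw [hc3]
  simp only [RCLike.re_to_complex, Complex.re_ofReal_mul, hc1, hc2]
  ring

theorem stmt12 {ι : Type*} (e : HilbertBasis ι ℂ H) (A : H →L[ℂ] H)
    (hA : Summable fun i => ‖A (e i)‖ ^ 2)
    (ν : ℝ) (hν₀ : 0 < ν) (hν₁ : ν < 1) :
    wHS e ν A = Real.sqrt (2 * ν ^ 2 - 2 * ν + 1) * hsNorm e A ↔
      trBasis e (A.comp A) = 0 := by
  classical
  set B := ContinuousLinearMap.adjoint A with hBdef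
  set N := ∑' i, ‖A (e i)‖ ^ 2 with hN
  have hNnn : 0 ≤ N := tsum_nonneg fun i => by positivity
  have hB : HasSum (fun i => ‖B (e i)‖ ^ 2) N := adjoint_hasSum' e A hA
  have hτs : Summable fun i => (inner ℂ (A (e i)) (B (e i)) : ℂ) := by
    apply Summable.of_norm
    have hbound : ∀ i, ‖(inner ℂ (A (e i)) (B (e i)) : ℂ)‖
        ≤ (‖A (e i)‖ ^ 2 + ‖B (e i)‖ ^ 2) / 2 := by
      intro i
      have h1 := norm_inner_le_norm (𝕜 := ℂ) (A (e i)) (B (e i))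
      nlinarith [sq_nonneg (‖A (e i)‖ - ‖B (e i)‖), norm_nonneg (A (e i)),
        norm_nonneg (B (e i))]
    exact Summable.of_nonneg_of_le (fun i => norm_nonneg _) hbound
      ((hA.add hB.summable).div_const 2)
  set τ := ∑' i, (inner ℂ (A (e i)) (B (e i)) : ℂ) with hτ
  set c := 2 * (ν * (1 - ν)) with hc
  have hcpos : 0 < c := by nlinarith
  have hSco : 0 ≤ 2 * ν ^ 2 - 2 * ν + 1 := by nlinarith
  set S := (2 * ν ^ 2 - 2 * ν + 1) * N with hS
  have hSnn : 0 ≤ S := mul_nonneg hSco hNnn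
  have hθval : ∀ θ : ℝ, hsNorm e (weightedPart ν θ A)
      = Real.sqrt (S + c * (Complex.exp (((-(2 * θ) : ℝ) : ℂ) * Complex.I) * τ).re) := by
    intro θ
    have hre : HasSum
        (fun i => (Complex.exp (((-(2 * θ) : ℝ) : ℂ) * Complex.I) *
          inner ℂ (A (e i)) (B (e i))).re)
        ((Complex.exp (((-(2 * θ) : ℝ) : ℂ) * Complex.I) * τ).re) := by
      have h0 := (hτs.hasSum.mul_left
        (Complex.exp (((-(2 * θ) : ℝ) : ℂ) * Complex.I))).mapL Complex.reCLM
      simpa using h0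
    have hsum : HasSum (fun i => ‖weightedPart ν θ A (e i)‖ ^ 2)
        (S + c * (Complex.exp (((-(2 * θ) : ℝ) : ℂ) * Complex.I) * τ).re) := by
      have h1 := ((hA.hasSum.mul_left (ν ^ 2)).add (hB.mul_left ((1 - ν) ^ 2))).add
        (hre.mul_left c)
      have h2 : (fun i => ν ^ 2 * ‖A (e i)‖ ^ 2 + (1 - ν) ^ 2 * ‖B (e i)‖ ^ 2
          + c * (Complex.exp (((-(2 * θ) : ℝ) : ℂ) * Complex.I) *
            inner ℂ (A (e i)) (B (e i))).re)
          = fun i => ‖weightedPart ν θ A (e i)‖ ^ 2 :=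
        funext fun i => by rw [wp_norm_sq' ν θ hν₀.le hν₁.le A (e i), hc]
      rw [h2] at h1
      rw [show S + c * (Complex.exp (((-(2 * θ) : ℝ) : ℂ) * Complex.I) * τ).re
          = ν ^ 2 * N + (1 - ν) ^ 2 * N
            + c * (Complex.exp (((-(2 * θ) : ℝ) : ℂ) * Complex.I) * τ).re by rw [hS]; ring]
      exact h1
    unfold hsNorm
    rw [hsum.tsum_eq]
  have hub : ∀ θ : ℝ,
      Real.sqrt (S + c * (Complex.exp (((-(2 * θ) : ℝ) : ℂ) * Complex.I) * τ).re)
      ≤ Real.sqrt (S + c * ‖τ‖) := by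
    intro θ
    apply Real.sqrt_le_sqrt
    have h1 : (Complex.exp (((-(2 * θ) : ℝ) : ℂ) * Complex.I) * τ).re ≤ ‖τ‖ := by
      refine (Complex.re_le_norm _).trans ?_
      rw [norm_mul, Complex.norm_exp_ofReal_mul_I, one_mul]
    nlinarith
  have hkey : wHS e ν A = Real.sqrt (S + c * ‖τ‖) := by
    unfold wHS
    rw [show (fun θ : ℝ => hsNorm e (weightedPart ν θ A)) = fun θ : ℝ =>
      Real.sqrt (S + c * (Complex.exp (((-(2 * θ) : ℝ) : ℂ) * Complex.I) * τ).re)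
      from funext hθval]
    apply le_antisymm
    · exact ciSup_le hub
    · have hbdd : BddAbove (Set.range fun θ : ℝ =>
          Real.sqrt (S + c * (Complex.exp (((-(2 * θ) : ℝ) : ℂ) * Complex.I) * τ).re)) :=
        ⟨Real.sqrt (S + c * ‖τ‖), by rintro x ⟨θ, rfl⟩; exact hub θ⟩
      obtain ⟨a, ha⟩ : ∃ a : ℝ, (‖τ‖ : ℂ) * Complex.exp ((a : ℂ) * Complex.I) = τ :=
        ⟨τ.arg, Complex.norm_mul_exp_arg_mul_I τ⟩
      have hexp : Complex.exp (((-(2 * (a / 2)) : ℝ) : ℂ) * Complex.I) * τ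
          = (‖τ‖ : ℂ) := by
        nth_rewrite 1 [← ha]
        rw [mul_comm ((‖τ‖ : ℂ)) (Complex.exp _), ← mul_assoc, ← Complex.exp_add]
        rw [show (((-(2 * (a / 2)) : ℝ) : ℂ) * Complex.I + (a : ℂ) * Complex.I) = 0 by
          push_cast; ring]
        rw [Complex.exp_zero, one_mul]
      have hval : Real.sqrt (S + c *
          (Complex.exp (((-(2 * (a / 2)) : ℝ) : ℂ) * Complex.I) * τ).re)
          = Real.sqrt (S + c * ‖τ‖) := by
        rw [hexp]; simp
      calc Real.sqrt (S + c * ‖τ‖) = _ := hval.symm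
        _ ≤ _ := le_ciSup hbdd (a / 2)
  have htr : trBasis e (A.comp A) = star τ := by
    have hterm : ∀ i, (inner ℂ (e i) ((A.comp A) (e i)) : ℂ)
        = star (inner ℂ (A (e i)) (B (e i)) : ℂ) := by
      intro i
      rw [hBdef, ContinuousLinearMap.adjoint_inner_right]
      rw [ContinuousLinearMap.comp_apply]
      exact (inner_conj_symm _ _).symm
    unfold trBasis
    rw [tsum_congr hterm, ← tsum_star]
  rw [hkey]
  unfold hsNorm
  rw [← hN, ← Real.sqrt_mul hSco, ← hS]
  rw [Real.sqrt_inj (add_nonneg hSnn (mul_nonneg hcpos.le (norm_nonneg τ))) hSnn]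
  constructor
  · intro h
    have h1 : c * ‖τ‖ = 0 := by linarith
    have h2 : ‖τ‖ = 0 := by
      rcases mul_eq_zero.mp h1 with h' | h'
      · exact absurd h' hcpos.ne'
      · exact h'
    have h3 : τ = 0 := norm_eq_zero.mp h2
    rw [htr, h3, star_zero]
  · intro h
    have h3 : τ = 0 := by
      rw [htr] at h
      exact star_eq_zero.mp h
    rw [h3]
    simp
end

section
/- Let H be a complex Hilbert space, let A and B be self-adjoint Hilbert–Schmidt operators on H, and let 0 ≤ ν ≤ 1. Let T denote the block diagonal operator [[A, 0],[0, B]] on H ⊕ H. Then w_{(2,ν)}(T)² = w_{(2,ν)}(A)² + w_{(2,ν)}(B)². -/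
set_option linter.unusedSectionVars false

variable {H : Type*} [NormedAddCommGroup H] [InnerProductSpace ℂ H] [CompleteSpace H]

/-! ### Auxiliary lemmas -/

theorem aux_tsum_sum_type {ι κ : Type*} (g : ι ⊕ κ → ENNReal) :
    ∑' k, g k = ∑' i, g (.inl i) + ∑' j, g (.inr j) := by
  have h1 : HasSum (g ∘ ((↑) : Set.range (Sum.inl : ι → ι ⊕ κ) → ι ⊕ κ)) (∑' i, g (.inl i)) :=
    ((Equiv.ofInjective (Sum.inl : ι → ι ⊕ κ) Sum.inl_injective).hasSum_iff
      (a := ∑' i, g (.inl i))).mp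
      (by simpa [Function.comp_def] using ENNReal.summable.hasSum (f := fun i => g (.inl i)))
  have h2 : HasSum (g ∘ ((↑) : Set.range (Sum.inr : κ → ι ⊕ κ) → ι ⊕ κ)) (∑' j, g (.inr j)) :=
    ((Equiv.ofInjective (Sum.inr : κ → ι ⊕ κ) Sum.inr_injective).hasSum_iff
      (a := ∑' j, g (.inr j))).mp
      (by simpa [Function.comp_def] using ENNReal.summable.hasSum (f := fun j => g (.inr j)))
  exact (h1.add_isCompl Set.isCompl_range_inl_range_inr h2).tsum_eq

theorem aux_parseval {E : Type*} [NormedAddCommGroup E] [InnerProductSpace ℂ E]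
    {ι : Type*} (b : HilbertBasis ι ℂ E) (x : E) :
    HasSum (fun i => ‖(inner ℂ (b i) x : ℂ)‖ ^ 2) (‖x‖ ^ 2) := by
  have h := lp.hasSum_norm (p := 2) (by norm_num) (b.repr x)
  have h2 : (2 : ENNReal).toReal = (2 : ℝ) := by norm_num
  rw [h2] at h
  simp only [Real.rpow_two] at h
  simpa [b.repr_apply_apply, LinearIsometryEquiv.norm_map, sq] using h

theorem aux_parsevalE {E : Type*} [NormedAddCommGroup E] [InnerProductSpace ℂ E]
    {ι : Type*} (b : HilbertBasis ι ℂ E) (x : E) :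
    ((‖x‖₊ : ENNReal)) ^ 2 = ∑' i, (‖(inner ℂ (b i) x : ℂ)‖₊ : ENNReal) ^ 2 := by
  have h := aux_parseval b x
  have h' := ENNReal.ofReal_tsum_of_nonneg (fun i => sq_nonneg ‖(inner ℂ (b i) x : ℂ)‖) h.summable
  rw [h.tsum_eq] at h'
  simp only [ENNReal.ofReal_pow (norm_nonneg _), ofReal_norm, enorm_eq_nnnorm] at h'
  exact h'

theorem aux_se_indep {E : Type*} [NormedAddCommGroup E] [InnerProductSpace ℂ E] [CompleteSpace E]
    {ι κ : Type*} (b : HilbertBasis ι ℂ E) (b' : HilbertBasis κ ℂ E)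
    (T : E →L[ℂ] E) (hT : ContinuousLinearMap.adjoint T = T) :
    ∑' i, (‖T (b i)‖₊ : ENNReal) ^ 2 = ∑' j, (‖T (b' j)‖₊ : ENNReal) ^ 2 := by
  calc ∑' i, (‖T (b i)‖₊ : ENNReal) ^ 2
      = ∑' i, ∑' j, (‖(inner ℂ (b' j) (T (b i)) : ℂ)‖₊ : ENNReal) ^ 2 := by
        simp_rw [← aux_parsevalE b']
    _ = ∑' j, ∑' i, (‖(inner ℂ (b' j) (T (b i)) : ℂ)‖₊ : ENNReal) ^ 2 := ENNReal.tsum_comm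
    _ = ∑' j, ∑' i, (‖(inner ℂ (b i) (T (b' j)) : ℂ)‖₊ : ENNReal) ^ 2 := by
        congr 1; funext j; congr 1; funext i
        have h : (inner ℂ (b' j) (T (b i)) : ℂ) =
            inner ℂ (ContinuousLinearMap.adjoint T (b' j)) (b i) := by
          rw [ContinuousLinearMap.adjoint_inner_left]
        rw [h, hT, ← enorm_eq_nnnorm, ← enorm_eq_nnnorm, ← ofReal_norm, ← ofReal_norm, norm_inner_symm]
    _ = ∑' j, (‖T (b' j)‖₊ : ENNReal) ^ 2 := by simp_rw [← aux_parsevalE b]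

noncomputable def prodVec {ι : Type*} (e : HilbertBasis ι ℂ H) : ι ⊕ ι → WithLp 2 (H × H) :=
  Sum.elim (fun i => (WithLp.equiv 2 (H × H)).symm (e i, 0))
    (fun i => (WithLp.equiv 2 (H × H)).symm (0, e i))

theorem prodVec_on {ι : Type*} (e : HilbertBasis ι ℂ H) : Orthonormal ℂ (prodVec e) := by
  classical
  rw [orthonormal_iff_ite]
  have he := orthonormal_iff_ite.mp e.orthonormal
  rintro (i | i) (j | j) <;>
    simp [prodVec, WithLp.prod_inner_apply, he, Sum.elim_inl, Sum.elim_inr, Sum.inl.injEq,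
      Sum.inr.injEq]

theorem prodVec_span {ι : Type*} (e : HilbertBasis ι ℂ H) :
    (Submodule.span ℂ (Set.range (prodVec e)))ᗮ = ⊥ := by
  rw [Submodule.eq_bot_iff]
  intro z hz
  have hz' : ∀ k, (inner ℂ (prodVec e k) z : ℂ) = 0 := fun k =>
    (Submodule.mem_orthogonal _ _).mp hz _ (Submodule.subset_span ⟨k, rfl⟩)
  have h1 : z.fst = 0 := by
    have h : e.repr z.fst = 0 := by
      ext i
      have hk := hz' (Sum.inl i)
      simp only [prodVec, Sum.elim_inl, WithLp.prod_inner_apply] at hk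
      simp only [WithLp.equiv_symm_apply, WithLp.ofLp_toLp, inner_zero_left, add_zero] at hk
      simpa [e.repr_apply_apply] using hk
    simpa using congrArg e.repr.symm h
  have h2 : z.snd = 0 := by
    have h : e.repr z.snd = 0 := by
      ext i
      have hk := hz' (Sum.inr i)
      simp only [prodVec, Sum.elim_inr, WithLp.prod_inner_apply] at hk
      simp only [WithLp.equiv_symm_apply, WithLp.ofLp_toLp, inner_zero_left, zero_add] at hk
      simpa [e.repr_apply_apply] using hk
    simpa using congrArg e.repr.symm h
  exact WithLp.ofLp_injective 2 (Prod.ext h1 h2)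

noncomputable def prodBasis {ι : Type*} (e : HilbertBasis ι ℂ H) :
    HilbertBasis (ι ⊕ ι) ℂ (WithLp 2 (H × H)) :=
  HilbertBasis.mkOfOrthogonalEqBot (prodVec_on e) (prodVec_span e)

theorem prodBasis_apply {ι : Type*} (e : HilbertBasis ι ℂ H) (k : ι ⊕ ι) :
    prodBasis e k = prodVec e k := by
  rw [prodBasis, HilbertBasis.coe_mkOfOrthogonalEqBot]

theorem blockOp_fst (X Y Z W : H →L[ℂ] H) (z : WithLp 2 (H × H)) :
    (blockOp X Y Z W z).fst = X z.fst + Y z.snd := rfl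

theorem blockOp_snd (X Y Z W : H →L[ℂ] H) (z : WithLp 2 (H × H)) :
    (blockOp X Y Z W z).snd = Z z.fst + W z.snd := rfl

theorem blockOp_sa (A B : H →L[ℂ] H) (hA : ContinuousLinearMap.adjoint A = A)
    (hB : ContinuousLinearMap.adjoint B = B) :
    ContinuousLinearMap.adjoint (blockOp A 0 0 B) = blockOp A 0 0 B := by
  symm
  rw [ContinuousLinearMap.eq_adjoint_iff]
  intro x y
  simp only [WithLp.prod_inner_apply, WithLp.ofLp_fst, WithLp.ofLp_snd, blockOp_fst, blockOp_snd,
    ContinuousLinearMap.zero_apply, add_zero, zero_add]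
  conv_lhs => rw [← hA, ← hB]
  rw [ContinuousLinearMap.adjoint_inner_left, ContinuousLinearMap.adjoint_inner_left]

theorem hsNorm_nonneg {E : Type*} [NormedAddCommGroup E] [InnerProductSpace ℂ E]
    {ι : Type*} (e : HilbertBasis ι ℂ E) (A : E →L[ℂ] E) : 0 ≤ hsNorm e A :=
  Real.sqrt_nonneg _

theorem hsNorm_smul {E : Type*} [NormedAddCommGroup E] [InnerProductSpace ℂ E]
    {ι : Type*} (e : HilbertBasis ι ℂ E) (c : ℂ) (A : E →L[ℂ] E) :
    hsNorm e (c • A) = ‖c‖ * hsNorm e A := by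
  unfold hsNorm
  simp_rw [ContinuousLinearMap.smul_apply, norm_smul, mul_pow, tsum_mul_left]
  rw [Real.sqrt_mul (sq_nonneg _), Real.sqrt_sq (norm_nonneg _)]

theorem weightedPart_sa {E : Type*} [NormedAddCommGroup E] [InnerProductSpace ℂ E]
    [CompleteSpace E] (ν θ : ℝ) (A : E →L[ℂ] E) (hA : ContinuousLinearMap.adjoint A = A) :
    weightedPart ν θ A =
      ((ν : ℂ) * Complex.exp (θ * Complex.I) +
        ((1 - ν : ℝ) : ℂ) * Complex.exp (-(θ * Complex.I))) • A := by
  rw [weightedPart, hA, add_smul]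

theorem norm_cθ_le {ν θ : ℝ} (hν₀ : 0 ≤ ν) (hν₁ : ν ≤ 1) :
    ‖(ν : ℂ) * Complex.exp (θ * Complex.I) +
      ((1 - ν : ℝ) : ℂ) * Complex.exp (-(θ * Complex.I))‖ ≤ 1 := by
  have h1 : ‖Complex.exp ((θ : ℂ) * Complex.I)‖ = 1 := by
    exact Complex.norm_exp_ofReal_mul_I θ
  have h2 : ‖Complex.exp (-((θ : ℂ) * Complex.I))‖ = 1 := by
    have h : -((θ : ℂ) * Complex.I) = ((-θ : ℝ) : ℂ) * Complex.I := by push_cast; ring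
    rw [h]; exact Complex.norm_exp_ofReal_mul_I (-θ)
  calc ‖(ν : ℂ) * Complex.exp (θ * Complex.I) +
      ((1 - ν : ℝ) : ℂ) * Complex.exp (-(θ * Complex.I))‖
      ≤ ‖(ν : ℂ) * Complex.exp (θ * Complex.I)‖ +
        ‖((1 - ν : ℝ) : ℂ) * Complex.exp (-(θ * Complex.I))‖ := norm_add_le _ _
    _ = ν + (1 - ν) := by
        rw [norm_mul, norm_mul, h1, h2, mul_one, mul_one, Complex.norm_real,
          Complex.norm_real, Real.norm_of_nonneg hν₀, Real.norm_of_nonneg (by linarith)]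
    _ = 1 := by ring

theorem wHS_eq_hsNorm {E : Type*} [NormedAddCommGroup E] [InnerProductSpace ℂ E]
    [CompleteSpace E] {ι : Type*} (e : HilbertBasis ι ℂ E) {ν : ℝ} (hν₀ : 0 ≤ ν) (hν₁ : ν ≤ 1)
    (A : E →L[ℂ] E) (hA : ContinuousLinearMap.adjoint A = A) :
    wHS e ν A = hsNorm e A := by
  have key : ∀ θ : ℝ, hsNorm e (weightedPart ν θ A) =
      ‖(ν : ℂ) * Complex.exp (θ * Complex.I) +
        ((1 - ν : ℝ) : ℂ) * Complex.exp (-(θ * Complex.I))‖ * hsNorm e A := fun θ => by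
    rw [weightedPart_sa ν θ A hA, hsNorm_smul]
  have hzero : hsNorm e (weightedPart ν 0 A) = hsNorm e A := by
    rw [key 0]; simp
  have hub : ∀ θ : ℝ, hsNorm e (weightedPart ν θ A) ≤ hsNorm e A := fun θ => by
    rw [key θ]
    calc _ ≤ 1 * hsNorm e A :=
          mul_le_mul_of_nonneg_right (norm_cθ_le hν₀ hν₁) (hsNorm_nonneg e A)
      _ = hsNorm e A := one_mul _
  refine le_antisymm (ciSup_le hub) ?_
  rw [← hzero]
  exact le_ciSup ⟨hsNorm e A, fun x ⟨θ, hθ⟩ => hθ ▸ hub θ⟩ 0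

theorem prod_nnnorm_sq (z : WithLp 2 (H × H)) :
    (‖z‖₊ : ENNReal) ^ 2 = (‖z.fst‖₊ : ENNReal) ^ 2 + (‖z.snd‖₊ : ENNReal) ^ 2 := by
  have h : ‖z‖ ^ 2 = ‖z.fst‖ ^ 2 + ‖z.snd‖ ^ 2 := by
    rw [WithLp.prod_norm_sq_eq_of_L2]
  have := congrArg ENNReal.ofReal h
  rwa [ENNReal.ofReal_add (sq_nonneg _) (sq_nonneg _), ENNReal.ofReal_pow (norm_nonneg _),
    ENNReal.ofReal_pow (norm_nonneg _), ENNReal.ofReal_pow (norm_nonneg _),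
    ofReal_norm, ofReal_norm, ofReal_norm, enorm_eq_nnnorm, enorm_eq_nnnorm, enorm_eq_nnnorm] at this

theorem stmt16 {ι κ : Type*} (e : HilbertBasis ι ℂ H)
    (f : HilbertBasis κ ℂ (WithLp 2 (H × H)))
    (A B : H →L[ℂ] H)
    (hA_sa : ContinuousLinearMap.adjoint A = A) (hB_sa : ContinuousLinearMap.adjoint B = B)
    (hA : Summable fun i => ‖A (e i)‖ ^ 2) (hB : Summable fun i => ‖B (e i)‖ ^ 2)
    (ν : ℝ) (hν₀ : 0 ≤ ν) (hν₁ : ν ≤ 1) :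
    (wHS f ν (blockOp A 0 0 B)) ^ 2 = (wHS e ν A) ^ 2 + (wHS e ν B) ^ 2 := by
  set T := blockOp A 0 0 B with hT
  have hT_sa : ContinuousLinearMap.adjoint T = T := blockOp_sa A B hA_sa hB_sa
  rw [wHS_eq_hsNorm f hν₀ hν₁ T hT_sa, wHS_eq_hsNorm e hν₀ hν₁ A hA_sa,
    wHS_eq_hsNorm e hν₀ hν₁ B hB_sa]
  rw [hsNorm, hsNorm, hsNorm, Real.sq_sqrt (tsum_nonneg fun i => sq_nonneg _),
    Real.sq_sqrt (tsum_nonneg fun i => sq_nonneg _),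
    Real.sq_sqrt (tsum_nonneg fun i => sq_nonneg _)]
  -- key computation of the ENNReal-valued sums
  have hTval : ∀ k : ι ⊕ ι, (‖T (prodBasis e k)‖₊ : ENNReal) ^ 2 =
      Sum.elim (fun i => (‖A (e i)‖₊ : ENNReal) ^ 2) (fun i => (‖B (e i)‖₊ : ENNReal) ^ 2) k := by
    rintro (i | i) <;>
    · rw [prodBasis_apply]
      rw [prod_nnnorm_sq]
      simp [prodVec, blockOp_fst, blockOp_snd, hT]
  have hsplit : ∑' j, (‖T (f j)‖₊ : ENNReal) ^ 2 =
      (∑' i, (‖A (e i)‖₊ : ENNReal) ^ 2) + ∑' i, (‖B (e i)‖₊ : ENNReal) ^ 2 := by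
    rw [aux_se_indep f (prodBasis e) T hT_sa]
    simp_rw [hTval]
    rw [aux_tsum_sum_type]
    simp
  have hAE : ∑' i, (‖A (e i)‖₊ : ENNReal) ^ 2 = ENNReal.ofReal (∑' i, ‖A (e i)‖ ^ 2) := by
    rw [ENNReal.ofReal_tsum_of_nonneg (fun i => sq_nonneg _) hA]
    simp_rw [ENNReal.ofReal_pow (norm_nonneg _), ofReal_norm, enorm_eq_nnnorm]
  have hBE : ∑' i, (‖B (e i)‖₊ : ENNReal) ^ 2 = ENNReal.ofReal (∑' i, ‖B (e i)‖ ^ 2) := by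
    rw [ENNReal.ofReal_tsum_of_nonneg (fun i => sq_nonneg _) hB]
    simp_rw [ENNReal.ofReal_pow (norm_nonneg _), ofReal_norm, enorm_eq_nnnorm]
  -- summability of the left-hand side
  have hsumT : Summable fun j => ‖T (f j)‖ ^ 2 := by
    have hne : ∑' j, ((‖T (f j)‖₊ ^ 2 : NNReal) : ENNReal) ≠ ⊤ := by
      push_cast
      rw [hsplit, hAE, hBE]
      exact ENNReal.add_ne_top.mpr ⟨ENNReal.ofReal_ne_top, ENNReal.ofReal_ne_top⟩
    have := ENNReal.tsum_coe_ne_top_iff_summable.mp hne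
    have h2 := NNReal.summable_coe.mpr this
    simpa [NNReal.coe_pow, coe_nnnorm] using h2
  have hTE : ∑' j, (‖T (f j)‖₊ : ENNReal) ^ 2 = ENNReal.ofReal (∑' j, ‖T (f j)‖ ^ 2) := by
    rw [ENNReal.ofReal_tsum_of_nonneg (fun j => sq_nonneg _) hsumT]
    simp_rw [ENNReal.ofReal_pow (norm_nonneg _), ofReal_norm, enorm_eq_nnnorm]
  rw [hTE, hAE, hBE, ← ENNReal.ofReal_add (tsum_nonneg fun i => sq_nonneg _)
    (tsum_nonneg fun i => sq_nonneg _)] at hsplit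
  exact (ENNReal.ofReal_eq_ofReal_iff (tsum_nonneg fun j => sq_nonneg _)
    (add_nonneg (tsum_nonneg fun i => sq_nonneg _) (tsum_nonneg fun i => sq_nonneg _))).mp hsplit
end
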